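/- The formal power series F(z) = Σ_{n≥0} S_{∞,n} z^n satisfies the polynomial identity z² F(z)² − (1 − z²) F(z) + z²/(1−z) = 0 as formal power series, equivalently (1−z)·z²·F(z)² − (1−z)(1−z²)·F(z) + z² = 0. -/

import Mathlib

def Sinf : ℕ → ℕ
  | 0 => 0
  | 1 => 0
  | n + 2 => 1 + Sinf n + ∑ k ∈ (Finset.range (n + 1)).attach, Sinf k * Sinf (n - k)
  termination_by n => n
  decreasing_by
    · omega
    · exact Nat.lt_of_le_of_lt (Nat.le_of_lt_succ (Finset.mem_range.mp k.2)) (by omega)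
    · exact Nat.lt_of_le_of_lt (Nat.sub_le _ _) (by omega)

open PowerSeries

noncomputable def Fgen : PowerSeries ℚ := PowerSeries.mk fun n => (Sinf n : ℚ)

lemma coeff_Fgen (n : ℕ) : coeff (R := ℚ) n Fgen = (Sinf n : ℚ) := coeff_mk n _

lemma Sinf_rec (n : ℕ) : Sinf (n + 2) =
    1 + Sinf n + ∑ k ∈ Finset.range (n + 1), Sinf k * Sinf (n - k) := by
  rw [Sinf]
  congr 1
  exact Finset.sum_attach (Finset.range (n + 1)) (fun k => Sinf k * Sinf (n - k))

lemma coeff_Fgen_sq (m : ℕ) : coeff (R := ℚ) m (Fgen ^ 2) =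
    ∑ k ∈ Finset.range (m + 1), (Sinf k : ℚ) * (Sinf (m - k) : ℚ) := by
  rw [sq, coeff_mul, Finset.Nat.sum_antidiagonal_eq_sum_range_succ_mk]
  simp [coeff_Fgen]

lemma key : (1 - X) * (1 - X ^ 2) * Fgen = X ^ 2 + (1 - X) * X ^ 2 * Fgen ^ 2 := by
  have h : Fgen - X * Fgen - X ^ 2 * Fgen + X ^ 3 * Fgen
      = X ^ 2 + (X ^ 2 * Fgen ^ 2 - X ^ 3 * Fgen ^ 2) := by
    ext n
    simp only [map_add, map_sub]
    rcases n with _ | _ | _ | n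
    · simp [coeff_Fgen, Sinf, coeff_zero_eq_constantCoeff]
    · have h1 : coeff (R := ℚ) (0 + 1) (X * Fgen) = coeff (R := ℚ) 0 Fgen := coeff_succ_X_mul 0 _
      have h2 : coeff (R := ℚ) (0 + 1) (X ^ 2 * Fgen) = 0 := by
        rw [coeff_X_pow_mul']; simp
      have h3 : coeff (R := ℚ) (0 + 1) (X ^ 3 * Fgen) = 0 := by
        rw [coeff_X_pow_mul']; simp
      have h4 : coeff (R := ℚ) (0 + 1) ((X : PowerSeries ℚ) ^ 2) = 0 := by
        rw [coeff_X_pow]; simp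
      have h5 : coeff (R := ℚ) (0 + 1) (X ^ 2 * Fgen ^ 2) = 0 := by
        rw [coeff_X_pow_mul']; simp
      have h6 : coeff (R := ℚ) (0 + 1) (X ^ 3 * Fgen ^ 2) = 0 := by
        rw [coeff_X_pow_mul']; simp
      simp only [zero_add] at *
      rw [h1, h2, h3, h4, h5, h6, coeff_Fgen, coeff_Fgen]
      simp [Sinf]
    · have h1 : coeff (R := ℚ) 2 (X * Fgen) = coeff (R := ℚ) 1 Fgen := coeff_succ_X_mul 1 _
      have h2 : coeff (R := ℚ) 2 (X ^ 2 * Fgen) = coeff (R := ℚ) 0 Fgen := coeff_X_pow_mul _ 2 0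
      have h3 : coeff (R := ℚ) 2 (X ^ 3 * Fgen) = 0 := by
        rw [coeff_X_pow_mul']; simp
      have h4 : coeff (R := ℚ) 2 ((X : PowerSeries ℚ) ^ 2) = 1 := by
        simp [coeff_X_pow]
      have h5 : coeff (R := ℚ) 2 (X ^ 2 * Fgen ^ 2) = coeff (R := ℚ) 0 (Fgen ^ 2) := coeff_X_pow_mul _ 2 0
      have h6 : coeff (R := ℚ) 2 (X ^ 3 * Fgen ^ 2) = 0 := by
        rw [coeff_X_pow_mul']; simp
      rw [h1, h2, h3, h4, h5, h6, coeff_Fgen, coeff_Fgen, coeff_Fgen, coeff_Fgen_sq]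
      have : Sinf 2 = 1 := by rw [Sinf_rec]; simp [Sinf]
      simp [this, Sinf]
    · -- n + 3 case
      have h1 : coeff (R := ℚ) (n + 2 + 1) (X * Fgen) = coeff (R := ℚ) (n + 2) Fgen :=
        coeff_succ_X_mul _ _
      have h2 : coeff (R := ℚ) (n + 1 + 2) (X ^ 2 * Fgen) = coeff (R := ℚ) (n + 1) Fgen :=
        coeff_X_pow_mul _ 2 _
      have h3 : coeff (R := ℚ) (n + 3) (X ^ 3 * Fgen) = coeff (R := ℚ) n Fgen :=
        coeff_X_pow_mul _ 3 _
      have h4 : coeff (R := ℚ) (n + 3) ((X : PowerSeries ℚ) ^ 2) = 0 := by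
        rw [coeff_X_pow, if_neg (by omega)]
      have h5 : coeff (R := ℚ) (n + 1 + 2) (X ^ 2 * Fgen ^ 2) = coeff (R := ℚ) (n + 1) (Fgen ^ 2) :=
        coeff_X_pow_mul _ 2 _
      have h6 : coeff (R := ℚ) (n + 3) (X ^ 3 * Fgen ^ 2) = coeff (R := ℚ) n (Fgen ^ 2) :=
        coeff_X_pow_mul _ 3 _
      have e1 : n + 2 + 1 = n + 3 := by ring
      have e2 : n + 1 + 2 = n + 3 := by ring
      rw [e1] at h1; rw [e2] at h2 h5
      rw [h1, h2, h3, h4, h5, h6, coeff_Fgen, coeff_Fgen, coeff_Fgen, coeff_Fgen,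
        coeff_Fgen_sq, coeff_Fgen_sq]
      have r1 : (Sinf (n + 3) : ℚ) = 1 + Sinf (n + 1)
          + ∑ k ∈ Finset.range (n + 2), (Sinf k : ℚ) * (Sinf (n + 1 - k) : ℚ) := by
        rw [show n + 3 = (n + 1) + 2 from rfl, Sinf_rec]; push_cast; ring
      have r2 : (Sinf (n + 2) : ℚ) = 1 + Sinf n
          + ∑ k ∈ Finset.range (n + 1), (Sinf k : ℚ) * (Sinf (n - k) : ℚ) := by
        rw [Sinf_rec]; push_cast; ring
      rw [r1, r2]; ring
  linear_combination h

theorem genFun_quadratic :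
    let F : PowerSeries ℚ := PowerSeries.mk fun n => (Sinf n : ℚ)
    (1 - X) * X ^ 2 * F ^ 2 - (1 - X) * (1 - X ^ 2) * F + X ^ 2 = 0 := by
  intro F
  have hF : F = Fgen := rfl
  rw [hF]
  linear_combination -key
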